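/- Let d ≥ 1 and λ > 0. Define a(λ) = (1/2)[(1+1/λ)^{1/2} + (1-1/λ)^{1/2}] and b(λ) = (1/2)[(1+1/λ)^{1/2} - (1-1/λ)^{1/2}] for λ ≥ 1. Then the function φ(x) = a(λ)|x| - b(λ)x₁ satisfies the eikonal equation |∇φ(x)|² = 1 + p(x)/λ with p(x) = -x₁/|x|, for all x ∈ ℝ^d \ {0}. -/

import Mathlib

lemma hasGradientAt_norm {F : Type*} [NormedAddCommGroup F] [InnerProductSpace ℝ F]
    [CompleteSpace F] {x : F} (hx : x ≠ 0) :
    HasGradientAt (fun y => ‖y‖) (‖x‖⁻¹ • x) x := by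
  rw [hasGradientAt_iff_hasFDerivAt]
  have hns : ‖x‖ ^ 2 ≠ 0 := pow_ne_zero _ (norm_ne_zero_iff.mpr hx)
  have h1 : HasFDerivAt (fun y : F => ‖y‖ ^ 2) (2 • (innerSL ℝ x)) x :=
    (hasStrictFDerivAt_norm_sq x).hasFDerivAt
  have h2 := (Real.hasDerivAt_sqrt hns).comp_hasFDerivAt x h1
  have hfun : (fun y : F => Real.sqrt (‖y‖ ^ 2)) = fun y => ‖y‖ := by
    ext y; rw [Real.sqrt_sq (norm_nonneg y)]
  rw [Function.comp_def, hfun] at h2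
  refine h2.congr_fderiv ?_
  ext y
  have hs : Real.sqrt (‖x‖ ^ 2) = ‖x‖ := Real.sqrt_sq (norm_nonneg x)
  simp [hs, InnerProductSpace.toDual, real_inner_smul_left, smul_smul]
  field_simp

/-- Saito's explicit solution of the eikonal equation `|∇φ|² = 1 + p/λ`
with `p(x) = -x₁/|x|`, given by `φ(x) = a(λ)|x| - b(λ)x₁`. -/
theorem stmt_0 (d : ℕ) (hd : 1 ≤ d) (lam : ℝ) (hlam : 1 ≤ lam)
    (a b : ℝ)
    (ha : a = (1 / 2) * (Real.sqrt (1 + 1 / lam) + Real.sqrt (1 - 1 / lam)))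
    (hb : b = (1 / 2) * (Real.sqrt (1 + 1 / lam) - Real.sqrt (1 - 1 / lam)))
    (φ p : EuclideanSpace ℝ (Fin d) → ℝ)
    (hφ : ∀ x : EuclideanSpace ℝ (Fin d), φ x = a * ‖x‖ - b * x ⟨0, hd⟩)
    (hp : ∀ x : EuclideanSpace ℝ (Fin d), p x = -(x ⟨0, hd⟩) / ‖x‖) :
    ∀ x : EuclideanSpace ℝ (Fin d), x ≠ 0 →
      ‖gradient φ x‖ ^ 2 = 1 + p x / lam := by
  intro x hx
  set i : Fin d := ⟨0, hd⟩
  set e : EuclideanSpace ℝ (Fin d) := EuclideanSpace.single i (1:ℝ) with he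
  set g : EuclideanSpace ℝ (Fin d) := (a * ‖x‖⁻¹) • x - b • e with hg
  have hxn : ‖x‖ ≠ 0 := norm_ne_zero_iff.mpr hx
  have hgrad : gradient φ x = g := by
    have h1 := (hasGradientAt_norm hx).hasFDerivAt
    have h2 : HasFDerivAt (fun y : EuclideanSpace ℝ (Fin d) => y i)
        (EuclideanSpace.proj i : EuclideanSpace ℝ (Fin d) →L[ℝ] ℝ) x :=
      (EuclideanSpace.proj i : EuclideanSpace ℝ (Fin d) →L[ℝ] ℝ).hasFDerivAt
    have h3 : HasFDerivAt φ
        (a • (InnerProductSpace.toDual ℝ _ (‖x‖⁻¹ • x) : _ →L[ℝ] ℝ)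
          - b • (EuclideanSpace.proj i : _ →L[ℝ] ℝ)) x := by
      have := (h1.const_mul a).sub (h2.const_mul b)
      have hfe : φ = (fun y : EuclideanSpace ℝ (Fin d) => a * ‖y‖) - fun y => b * y i := by
        ext y; rw [hφ y]; rfl
      rw [hfe]; exact this
    have h4 : HasGradientAt φ g x := by
      rw [hasGradientAt_iff_hasFDerivAt]
      refine h3.congr_fderiv ?_
      ext y
      simp [InnerProductSpace.toDual, hg, inner_sub_left, real_inner_smul_left,
        EuclideanSpace.inner_single_left, he, EuclideanSpace.single_apply, mul_assoc]
    exact h4.gradient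
  rw [hgrad, hp x]
  have hsq : ‖g‖ ^ 2 = (a*a + b*b) - 2*a*b * (x i / ‖x‖) := by
    rw [hg, @norm_sub_sq_real, norm_smul, norm_smul, real_inner_smul_left,
      real_inner_smul_right, EuclideanSpace.inner_single_right,
      EuclideanSpace.norm_single]
    simp only [Real.norm_eq_abs, norm_one, mul_pow, sq_abs, conj_trivial, mul_one]
    field_simp
    ring
  have hl0 : (0:ℝ) < lam := lt_of_lt_of_le one_pos hlam
  have hs1 : Real.sqrt (1 + 1/lam) ^ 2 = 1 + 1/lam := Real.sq_sqrt (by positivity)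
  have hs2 : Real.sqrt (1 - 1/lam) ^ 2 = 1 - 1/lam :=
    Real.sq_sqrt (sub_nonneg.mpr (by rw [div_le_one hl0]; exact hlam))
  have hab1 : a*a + b*b = 1 := by
    rw [ha, hb]; linear_combination hs1/2 + hs2/2
  have hab2 : 2*a*b = 1/lam := by
    rw [ha, hb]; linear_combination hs1/2 - hs2/2
  rw [hsq]
  rw [hab1, hab2]
  field_simp
  ring
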